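/- Let γ_x be the real symmetric 3×3 matrix with diagonal entries λ₁, λ₂, λ₃ ≥ 1 and off-diagonal entries d_{ij}^+ = (√a_{ij} + √b_{ij})/(4√(λ_iλ_j)), where a_{ij} = [(λ_i−λ_j)²−(λ_k−1)²][(λ_i−λ_j)²−(λ_k+1)²] and b_{ij} = [(λ_i+λ_j)²−(λ_k−1)²][(λ_i+λ_j)²−(λ_k+1)²]. If λ_i + 1 ≤ λ_j + λ_k for all permutations (i,j,k), then γ_x is positive semidefinite. -/

import Mathlib

/-- `a_{ij}` with third index `k`. -/
noncomputable def aCoef (li lj lk : ℝ) : ℝ :=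
  ((li - lj) ^ 2 - (lk - 1) ^ 2) * ((li - lj) ^ 2 - (lk + 1) ^ 2)

/-- `b_{ij}` with third index `k`. -/
noncomputable def bCoef (li lj lk : ℝ) : ℝ :=
  ((li + lj) ^ 2 - (lk - 1) ^ 2) * ((li + lj) ^ 2 - (lk + 1) ^ 2)

/-- `d_{ij}^+ = (√a_{ij} + √b_{ij})/(4 √(λ_i λ_j))`. -/
noncomputable def dPlus (li lj lk : ℝ) : ℝ :=
  (Real.sqrt (aCoef li lj lk) + Real.sqrt (bCoef li lj lk)) / (4 * Real.sqrt (li * lj))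

private theorem quadForm_nonneg (a b c d e f x y z : ℝ) (ha : 0 < a) (hm : 0 < a*d - b^2)
    (hΔ : 0 ≤ a*d*f + 2*(b*c*e) - a*e^2 - d*c^2 - f*b^2) :
    0 ≤ a*x^2 + d*y^2 + f*z^2 + 2*(b*(x*y)) + 2*(c*(x*z)) + 2*(e*(y*z)) := by
  have h1 : 0 < a*(a*d - b^2) := mul_pos ha hm
  have hQ : 0 ≤ (a*(a*d - b^2)) *
      (a*x^2 + d*y^2 + f*z^2 + 2*(b*(x*y)) + 2*(c*(x*z)) + 2*(e*(y*z))) := by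
    have idq : (a*(a*d - b^2)) *
        (a*x^2 + d*y^2 + f*z^2 + 2*(b*(x*y)) + 2*(c*(x*z)) + 2*(e*(y*z)))
        = (a*d - b^2)*(a*x + b*y + c*z)^2 + ((a*d - b^2)*y + (a*e - b*c)*z)^2
          + (a*(a*d*f + 2*(b*c*e) - a*e^2 - d*c^2 - f*b^2))*z^2 := by ring
    rw [idq]
    have t1 : 0 ≤ (a*d - b^2)*(a*x + b*y + c*z)^2 := mul_nonneg hm.le (sq_nonneg _)
    have t2 : 0 ≤ ((a*d - b^2)*y + (a*e - b*c)*z)^2 := sq_nonneg _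
    have t3 : 0 ≤ (a*(a*d*f + 2*(b*c*e) - a*e^2 - d*c^2 - f*b^2))*z^2 :=
      mul_nonneg (mul_nonneg ha.le hΔ) (sq_nonneg _)
    linarith
  exact nonneg_of_mul_nonneg_right hQ h1

set_option maxHeartbeats 1600000 in
theorem stmt_9 (l₁ l₂ l₃ : ℝ) (h₁ : 1 ≤ l₁) (h₂ : 1 ≤ l₂) (h₃ : 1 ≤ l₃)
    (ht₁ : l₁ + 1 ≤ l₂ + l₃) (ht₂ : l₂ + 1 ≤ l₁ + l₃) (ht₃ : l₃ + 1 ≤ l₁ + l₂)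
    (γx : Matrix (Fin 3) (Fin 3) ℝ)
    (hγx : γx = !![l₁, dPlus l₁ l₂ l₃, dPlus l₁ l₃ l₂;
                   dPlus l₁ l₂ l₃, l₂, dPlus l₂ l₃ l₁;
                   dPlus l₁ l₃ l₂, dPlus l₂ l₃ l₁, l₃]) :
    γx.PosSemidef := by
  have hl1 : (0:ℝ) < l₁ := by linarith
  have hl2 : (0:ℝ) < l₂ := by linarith
  have hl3 : (0:ℝ) < l₃ := by linarith
  set s0 := Real.sqrt ((l₁+l₂+l₃)^2 - 1) with hs0d
  set s1 := Real.sqrt ((l₁+l₂-l₃)^2 - 1) with hs1d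
  set s2 := Real.sqrt ((l₁-l₂+l₃)^2 - 1) with hs2d
  set s3 := Real.sqrt ((l₁-l₂-l₃)^2 - 1) with hs3d
  have hP0 : (0:ℝ) ≤ (l₁+l₂+l₃)^2 - 1 := by nlinarith
  have hP1 : (0:ℝ) ≤ (l₁+l₂-l₃)^2 - 1 := by
    nlinarith [mul_nonneg (by linarith : (0:ℝ) ≤ l₁+l₂-l₃-1) (by linarith : (0:ℝ) ≤ l₁+l₂-l₃+1)]
  have hP2 : (0:ℝ) ≤ (l₁-l₂+l₃)^2 - 1 := by
    nlinarith [mul_nonneg (by linarith : (0:ℝ) ≤ l₁-l₂+l₃-1) (by linarith : (0:ℝ) ≤ l₁-l₂+l₃+1)]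
  have hP3 : (0:ℝ) ≤ (l₁-l₂-l₃)^2 - 1 := by
    nlinarith [mul_nonneg (by linarith : (0:ℝ) ≤ l₂+l₃-l₁-1) (by linarith : (0:ℝ) ≤ l₂+l₃-l₁+1)]
  have hs0 : s0^2 = (l₁+l₂+l₃)^2 - 1 := Real.sq_sqrt hP0
  have hs1 : s1^2 = (l₁+l₂-l₃)^2 - 1 := Real.sq_sqrt hP1
  have hs2 : s2^2 = (l₁-l₂+l₃)^2 - 1 := Real.sq_sqrt hP2
  have hs3 : s3^2 = (l₁-l₂-l₃)^2 - 1 := Real.sq_sqrt hP3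
  have hs0n : 0 ≤ s0 := Real.sqrt_nonneg _
  have hs1n : 0 ≤ s1 := Real.sqrt_nonneg _
  have hs2n : 0 ≤ s2 := Real.sqrt_nonneg _
  have hs3n : 0 ≤ s3 := Real.sqrt_nonneg _
  -- expressions for the dPlus entries
  have hd12 : dPlus l₁ l₂ l₃ = (s2*s3 + s0*s1) / (4 * Real.sqrt (l₁*l₂)) := by
    rw [dPlus, show aCoef l₁ l₂ l₃ = ((l₁-l₂+l₃)^2-1) * ((l₁-l₂-l₃)^2-1) by rw [aCoef]; ring,
      show bCoef l₁ l₂ l₃ = ((l₁+l₂+l₃)^2-1) * ((l₁+l₂-l₃)^2-1) by rw [bCoef]; ring,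
      Real.sqrt_mul hP2, Real.sqrt_mul hP0, ← hs0d, ← hs1d, ← hs2d, ← hs3d]
  have hd13 : dPlus l₁ l₃ l₂ = (s1*s3 + s0*s2) / (4 * Real.sqrt (l₁*l₃)) := by
    rw [dPlus, show aCoef l₁ l₃ l₂ = ((l₁+l₂-l₃)^2-1) * ((l₁-l₂-l₃)^2-1) by rw [aCoef]; ring,
      show bCoef l₁ l₃ l₂ = ((l₁+l₂+l₃)^2-1) * ((l₁-l₂+l₃)^2-1) by rw [bCoef]; ring,
      Real.sqrt_mul hP1, Real.sqrt_mul hP0, ← hs0d, ← hs1d, ← hs2d, ← hs3d]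
  have hd23 : dPlus l₂ l₃ l₁ = (s1*s2 + s0*s3) / (4 * Real.sqrt (l₂*l₃)) := by
    rw [dPlus, show aCoef l₂ l₃ l₁ = ((l₁+l₂-l₃)^2-1) * ((l₁-l₂+l₃)^2-1) by rw [aCoef]; ring,
      show bCoef l₂ l₃ l₁ = ((l₁+l₂+l₃)^2-1) * ((l₁-l₂-l₃)^2-1) by rw [bCoef]; ring,
      Real.sqrt_mul hP1, Real.sqrt_mul hP0, ← hs0d, ← hs1d, ← hs2d, ← hs3d]
  have hq12 : (Real.sqrt (l₁*l₂))^2 = l₁*l₂ := Real.sq_sqrt (by positivity)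
  have hq13 : (Real.sqrt (l₁*l₃))^2 = l₁*l₃ := Real.sq_sqrt (by positivity)
  have hq23 : (Real.sqrt (l₂*l₃))^2 = l₂*l₃ := Real.sq_sqrt (by positivity)
  have hqqq : Real.sqrt (l₁*l₂) * Real.sqrt (l₁*l₃) * Real.sqrt (l₂*l₃) = l₁*l₂*l₃ := by
    rw [← Real.sqrt_mul (by positivity), ← Real.sqrt_mul (by positivity),
      show l₁*l₂*(l₁*l₃)*(l₂*l₃) = (l₁*l₂*l₃)^2 by ring]
    exact Real.sqrt_sq (by positivity)
  have hne12 : l₁*l₂ ≠ 0 := by positivity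
  have hne13 : l₁*l₃ ≠ 0 := by positivity
  have hne23 : l₂*l₃ ≠ 0 := by positivity
  have hH : (0:ℝ) ≤ (l₁+l₂+l₃)*(-l₁+l₂+l₃)*(l₁-l₂+l₃)*(l₁+l₂-l₃) := by
    apply mul_nonneg (mul_nonneg (mul_nonneg _ _) _) _ <;> linarith
  have e1 : (1:ℝ) ≤ l₁^2 := by nlinarith [sq_nonneg (l₁-1)]
  have e2 : (1:ℝ) ≤ l₂^2 := by nlinarith [sq_nonneg (l₂-1)]
  have e3 : (1:ℝ) ≤ l₃^2 := by nlinarith [sq_nonneg (l₃-1)]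
  have hSpos : (0:ℝ) < -2*l₁^4 - 2*l₂^4 - 2*l₃^4 + 4*l₁^2*l₂^2 + 4*l₁^2*l₃^2 + 4*l₂^2*l₃^2
      + 4*l₁^2 + 4*l₂^2 + 4*l₃^2 - 2 := by
    linarith only [hH, e1, e2, e3]
  have m12 : 16*(l₁*l₂)*(dPlus l₁ l₂ l₃)^2 = (s2*s3 + s0*s1)^2 := by
    rw [hd12, div_pow, mul_pow, hq12]; field_simp; ring
  have m13 : 16*(l₁*l₃)*(dPlus l₁ l₃ l₂)^2 = (s1*s3 + s0*s2)^2 := by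
    rw [hd13, div_pow, mul_pow, hq13]; field_simp; ring
  have m23 : 16*(l₂*l₃)*(dPlus l₂ l₃ l₁)^2 = (s1*s2 + s0*s3)^2 := by
    rw [hd23, div_pow, mul_pow, hq23]; field_simp; ring
  have mT : 64*(l₁*l₂*l₃)*(dPlus l₁ l₂ l₃ * dPlus l₁ l₃ l₂ * dPlus l₂ l₃ l₁)
      = (s2*s3 + s0*s1)*(s1*s3 + s0*s2)*(s1*s2 + s0*s3) := by
    rw [hd12, hd13, hd23, div_mul_div_comm, div_mul_div_comm,
      show 4*Real.sqrt (l₁*l₂)*(4*Real.sqrt (l₁*l₃))*(4*Real.sqrt (l₂*l₃))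
        = 64*(Real.sqrt (l₁*l₂)*Real.sqrt (l₁*l₃)*Real.sqrt (l₂*l₃)) by ring, hqqq]
    field_simp
  -- key scalar quantities
  have keyM : 16*(l₁*l₂)*(l₁*l₂ - (dPlus l₁ l₂ l₃)^2)
      = (-2*l₁^4 - 2*l₂^4 - 2*l₃^4 + 4*l₁^2*l₂^2 + 4*l₁^2*l₃^2 + 4*l₂^2*l₃^2
          + 4*l₁^2 + 4*l₂^2 + 4*l₃^2 - 2) - 2*(s0*s1*s2*s3) := by
    linear_combination (-1)*m12 + (-s2^2)*hs3
      + (1 - l₃^2 - 2*l₂*l₃ - l₂^2 + 2*l₁*l₃ + 2*l₁*l₂ - l₁^2)*hs2 + (-s0^2)*hs1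
      + (1 - l₃^2 + 2*l₂*l₃ - l₂^2 + 2*l₁*l₃ - 2*l₁*l₂ - l₁^2)*hs0
  have keyD : 16*(l₁*l₂*l₃)*(l₁*l₂*l₃ + 2*(dPlus l₁ l₂ l₃ * dPlus l₁ l₃ l₂ * dPlus l₂ l₃ l₁)
        - l₁*(dPlus l₂ l₃ l₁)^2 - l₂*(dPlus l₁ l₃ l₂)^2 - l₃*(dPlus l₁ l₂ l₃)^2)
      = (-2*l₁^4 - 2*l₂^4 - 2*l₃^4 + 4*l₁^2*l₂^2 + 4*l₁^2*l₃^2 + 4*l₂^2*l₃^2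
          + 4*l₁^2 + 4*l₂^2 + 4*l₃^2 - 2) - 2*(s0*s1*s2*s3) := by
    linear_combination (1/2)*mT + (-(l₁^2))*m23 + (-(l₂^2))*m13 + (-(l₃^2))*m12
      + ((1/2)*s1^2*s2^2 + (1/2)*s0*s1*s2*s3 + (1/2)*s0^2*s2^2 + (1/2)*s0^2*s1^2
        + (-1)*l₃^2*s2^2 + (-1)*l₂^2*s1^2 + (-1)*l₁^2*s0^2)*hs3
      + ((-1/2)*s1^2 + (1/2)*s0*s1*s2*s3 + (-1/2)*s0^2 + (1/2)*s0^2*s1^2 + l₃^2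
        + (1/2)*l₃^2*s1^2 + (1/2)*l₃^2*s0^2 + (-1)*l₃^4 + l₂*l₃*s1^2 + l₂*l₃*s0^2
        + (-2)*l₂*l₃^3 + (1/2)*l₂^2*s1^2 + (-1/2)*l₂^2*s0^2 + (-1)*l₂^2*l₃^2
        + (-1)*l₁*l₃*s1^2 + (-1)*l₁*l₃*s0^2 + 2*l₁*l₃^3 + (-1)*l₁*l₂*s1^2
        + (-1)*l₁*l₂*s0^2 + 2*l₁*l₂*l₃^2 + (-1/2)*l₁^2*s1^2 + (1/2)*l₁^2*s0^2
        + (-1)*l₁^2*l₃^2)*hs2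
      + ((1/2) + (1/2)*s0*s1*s2*s3 + (-1)*s0^2 + (-1)*l₃^2 + (1/2)*l₃^4 + l₂^2*s0^2
        + (-2)*l₂^2*l₃^2 + (-2)*l₂^3*l₃ + (-1/2)*l₂^4 + 2*l₁*l₂ + (-2)*l₁*l₂*s0^2
        + 2*l₁*l₂*l₃^2 + 2*l₁*l₂^2*l₃ + l₁^2*s0^2 + (-2)*l₁^2*l₃^2 + 2*l₁^2*l₂*l₃
        + l₁^2*l₂^2 + (-2)*l₁^3*l₃ + (-1/2)*l₁^4)*hs1
      + ((3/2) + (1/2)*s0*s1*s2*s3 + (-2)*l₃^2 + (1/2)*l₃^4 + 2*l₂*l₃ + (-2)*l₂^2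
        + (-1)*l₂^2*l₃^2 + (1/2)*l₂^4 + 2*l₁*l₃ + 2*l₁*l₂ + (-2)*l₁^2
        + (-1)*l₁^2*l₃^2 + (-1)*l₁^2*l₂^2 + (1/2)*l₁^4)*hs0
  have hp2 : (s0*s1*s2*s3)^2
      = ((l₁+l₂+l₃)^2-1)*((l₁+l₂-l₃)^2-1)*((l₁-l₂+l₃)^2-1)*((l₁-l₂-l₃)^2-1) := by
    linear_combination (s0^2*s1^2*s2^2)*hs3 + (((l₁-l₂-l₃)^2-1)*s0^2*s1^2)*hs2
      + (((l₁-l₂-l₃)^2-1)*((l₁-l₂+l₃)^2-1)*s0^2)*hs1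
      + (((l₁-l₂-l₃)^2-1)*((l₁-l₂+l₃)^2-1)*((l₁+l₂-l₃)^2-1))*hs0
  have hkey : ((-2*l₁^4 - 2*l₂^4 - 2*l₃^4 + 4*l₁^2*l₂^2 + 4*l₁^2*l₃^2 + 4*l₂^2*l₃^2
          + 4*l₁^2 + 4*l₂^2 + 4*l₃^2 - 2) - 2*(s0*s1*s2*s3))
        * ((-2*l₁^4 - 2*l₂^4 - 2*l₃^4 + 4*l₁^2*l₂^2 + 4*l₁^2*l₃^2 + 4*l₂^2*l₃^2
          + 4*l₁^2 + 4*l₂^2 + 4*l₃^2 - 2) + 2*(s0*s1*s2*s3))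
      = 256*(l₁*l₂*l₃)^2 := by
    linear_combination (-4)*hp2
  have pnn : 0 ≤ s0*s1*s2*s3 :=
    mul_nonneg (mul_nonneg (mul_nonneg hs0n hs1n) hs2n) hs3n
  have hsum : (0:ℝ) < (-2*l₁^4 - 2*l₂^4 - 2*l₃^4 + 4*l₁^2*l₂^2 + 4*l₁^2*l₃^2 + 4*l₂^2*l₃^2
      + 4*l₁^2 + 4*l₂^2 + 4*l₃^2 - 2) + 2*(s0*s1*s2*s3) := by linarith only [hSpos, pnn]
  have hWpos : (0:ℝ) < (-2*l₁^4 - 2*l₂^4 - 2*l₃^4 + 4*l₁^2*l₂^2 + 4*l₁^2*l₃^2 + 4*l₂^2*l₃^2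
      + 4*l₁^2 + 4*l₂^2 + 4*l₃^2 - 2) - 2*(s0*s1*s2*s3) := by
    rw [(eq_div_iff (ne_of_gt hsum)).2 hkey]
    positivity
  have hm12 : 0 < l₁*l₂ - (dPlus l₁ l₂ l₃)^2 := by
    have h16 : (0:ℝ) < 16*(l₁*l₂) := by positivity
    have e : l₁*l₂ - (dPlus l₁ l₂ l₃)^2
        = ((-2*l₁^4 - 2*l₂^4 - 2*l₃^4 + 4*l₁^2*l₂^2 + 4*l₁^2*l₃^2 + 4*l₂^2*l₃^2
          + 4*l₁^2 + 4*l₂^2 + 4*l₃^2 - 2) - 2*(s0*s1*s2*s3)) / (16*(l₁*l₂)) :=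
      (eq_div_iff (ne_of_gt h16)).2 (by linear_combination keyM)
    rw [e]; exact div_pos hWpos h16
  have hdet : 0 < l₁*l₂*l₃ + 2*(dPlus l₁ l₂ l₃ * dPlus l₁ l₃ l₂ * dPlus l₂ l₃ l₁)
      - l₁*(dPlus l₂ l₃ l₁)^2 - l₂*(dPlus l₁ l₃ l₂)^2 - l₃*(dPlus l₁ l₂ l₃)^2 := by
    have h16 : (0:ℝ) < 16*(l₁*l₂*l₃) := by positivity
    have e : l₁*l₂*l₃ + 2*(dPlus l₁ l₂ l₃ * dPlus l₁ l₃ l₂ * dPlus l₂ l₃ l₁)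
        - l₁*(dPlus l₂ l₃ l₁)^2 - l₂*(dPlus l₁ l₃ l₂)^2 - l₃*(dPlus l₁ l₂ l₃)^2
        = ((-2*l₁^4 - 2*l₂^4 - 2*l₃^4 + 4*l₁^2*l₂^2 + 4*l₁^2*l₃^2 + 4*l₂^2*l₃^2
          + 4*l₁^2 + 4*l₂^2 + 4*l₃^2 - 2) - 2*(s0*s1*s2*s3)) / (16*(l₁*l₂*l₃)) :=
      (eq_div_iff (ne_of_gt h16)).2 (by linear_combination keyD)
    rw [e]; exact div_pos hWpos h16
  rw [Matrix.posSemidef_iff_dotProduct_mulVec]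
  constructor
  · rw [hγx]
    ext i j
    fin_cases i <;> fin_cases j <;> simp [Matrix.conjTranspose_apply]
  · intro x
    rw [hγx]
    simp [Matrix.mulVec, dotProduct, Fin.sum_univ_three, Matrix.cons_val_zero,
      Matrix.cons_val_one, Matrix.head_cons, Matrix.cons_val_two, Matrix.tail_cons]
    have key := quadForm_nonneg l₁ (dPlus l₁ l₂ l₃) (dPlus l₁ l₃ l₂) l₂ (dPlus l₂ l₃ l₁) l₃
      (x 0) (x 1) (x 2) hl1 hm12 hdet.le
    linarith only [key]
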